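/- Past reachability in the comparison warped product: let κ, β ∈ ℝ with κ > 0 or β ≤ −(n−1)√|κ|, and let M = [0, b_{κ,β}) ×_{f_{κ,β}} Σ for a connected Riemannian manifold (Σ,h). Then for any t ∈ [0, b_{κ,β}) and r > 0 there exists t̃ ∈ (t, b_{κ,β}) such that {t} × B_p(r) ⊂ J⁻((t̃, p)) for every p ∈ Σ; moreover M = J⁻([0, b_{κ,β}) × {p}) for any p ∈ Σ. -/

import Mathlib

open Real Set

/-- Inverse hyperbolic tangent, `artanh x = ½ log((1+x)/(1−x))`; `coth⁻¹ y = artanh (1/y)`. -/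
noncomputable def artanh (x : ℝ) : ℝ := Real.log ((1 + x) / (1 - x)) / 2

/-- The integration constant `c(κ,β)` of Table 1. -/
noncomputable def ckb (n : ℕ) (κ β : ℝ) : ℝ :=
  if 0 < κ then π / 2 - Real.arctan (β / (((n : ℝ) - 1) * Real.sqrt κ))
  else if κ = 0 then (if β = 0 then 0 else ((n : ℝ) - 1) / β)
  else if |β| < ((n : ℝ) - 1) * Real.sqrt (-κ) then
    _root_.artanh (β / (((n : ℝ) - 1) * Real.sqrt (-κ)))
  else if |β| = ((n : ℝ) - 1) * Real.sqrt (-κ) then 0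
  else _root_.artanh ((((n : ℝ) - 1) * Real.sqrt (-κ)) / β)

/-- The comparison warping function `f_{κ,β}` of Table 1. -/
noncomputable def fkb (n : ℕ) (κ β : ℝ) (t : ℝ) : ℝ :=
  if 0 < κ then Real.sin (Real.sqrt κ * t + ckb n κ β) / Real.sqrt κ
  else if κ = 0 then (if β = 0 then 1 else t + ckb n κ β)
  else if |β| < ((n : ℝ) - 1) * Real.sqrt (-κ) then
    Real.cosh (Real.sqrt (-κ) * t + ckb n κ β) / Real.sqrt (-κ)
  else if |β| = ((n : ℝ) - 1) * Real.sqrt (-κ) then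
    Real.exp ((if 0 ≤ β then 1 else -1) * Real.sqrt (-κ) * t)
  else Real.sinh (Real.sqrt (-κ) * t + ckb n κ β) / Real.sqrt (-κ)

/-- The right endpoint `b_{κ,β}` (first zero of `f_{κ,β}` after `0`, or `∞`). -/
noncomputable def bkb (n : ℕ) (κ β : ℝ) : EReal :=
  if 0 < κ then (((π - ckb n κ β) / Real.sqrt κ : ℝ) : EReal)
  else if κ = 0 then (if β < 0 then ((-(((n : ℝ) - 1) / β) : ℝ) : EReal) else ⊤)
  else if β < -(((n : ℝ) - 1) * Real.sqrt (-κ)) then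
    ((-(ckb n κ β) / Real.sqrt (-κ) : ℝ) : EReal)
  else ⊤

/-- `x` lies in the causal past of `y` in the Lorentzian warped product
`−dt² + f(t)² h` over the metric space `X`: there is a future directed causal curve
from `x` to `y`, written with its spatial projection `cb` parametrized `1`-Lipschitz
(h-arclength) and time component `c₀` satisfying `c₀' ≥ |f ∘ c₀|`. -/
def causalPast {X : Type*} [MetricSpace X] (f : ℝ → ℝ) (x y : ℝ × X) : Prop :=
  x = y ∨ ∃ (S : ℝ) (c₀ : ℝ → ℝ) (cb : ℝ → X), 0 < S ∧
    c₀ 0 = x.1 ∧ c₀ S = y.1 ∧ cb 0 = x.2 ∧ cb S = y.2 ∧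
    LipschitzWith 1 cb ∧
    ∀ s ∈ Set.Icc 0 S, ∃ d : ℝ, |f (c₀ s)| ≤ d ∧ HasDerivAt c₀ d s


lemma sinh_le_mul_cosh {x : ℝ} (hx : 0 ≤ x) : Real.sinh x ≤ x * Real.cosh x := by
  have hd : ∀ y : ℝ, HasDerivAt (fun z : ℝ => z * Real.cosh z - Real.sinh z)
      (y * Real.sinh y) y := by
    intro y
    have := ((hasDerivAt_id y).mul (Real.hasDerivAt_cosh y)).sub (Real.hasDerivAt_sinh y)
    refine this.congr_deriv ?_
    simp only [id]; ring
  have key : MonotoneOn (fun z : ℝ => z * Real.cosh z - Real.sinh z) (Set.Ici 0) := by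
    apply monotoneOn_of_deriv_nonneg (convex_Ici 0)
    · exact (Continuous.sub (continuous_id.mul Real.continuous_cosh)
        Real.continuous_sinh).continuousOn
    · intro y _
      exact (hd y).differentiableAt.differentiableWithinAt
    · intro y hy
      rw [interior_Ici] at hy
      rw [(hd y).deriv]
      exact mul_nonneg hy.le (Real.sinh_nonneg_iff.mpr hy.le)
  have h := key (self_mem_Ici) (mem_Ici.mpr hx) hx
  simpa using h

lemma flow_finite (f : ℝ → ℝ) (b t K T : ℝ) (htb : t < b) (hK : 0 < K) (hT : 0 < T)
    (hf : ∀ x, t ≤ x → x < b → |f x| ≤ K * (b - x)) :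
    ∃ u : ℝ → ℝ, u 0 = t ∧ t < u T ∧ u T < b ∧
      ∀ s ∈ Set.Icc 0 T, ∃ d, |f (u s)| ≤ d ∧ HasDerivAt u d s := by
  refine ⟨fun s => b - (b - t) * Real.exp (-(K * s)), by simp, ?_, ?_, ?_⟩
  · show t < b - (b - t) * Real.exp (-(K * T))
    have h1 : Real.exp (-(K * T)) < 1 := Real.exp_lt_one_iff.mpr (by nlinarith)
    nlinarith
  · show b - (b - t) * Real.exp (-(K * T)) < b
    have := Real.exp_pos (-(K * T)); nlinarith
  · intro s hs
    have hge : t ≤ b - (b - t) * Real.exp (-(K * s)) := by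
      have h1 : Real.exp (-(K * s)) ≤ 1 := Real.exp_le_one_iff.mpr (by nlinarith [hs.1])
      nlinarith
    have hltb : b - (b - t) * Real.exp (-(K * s)) < b := by
      have := Real.exp_pos (-(K * s)); nlinarith
    refine ⟨K * ((b - t) * Real.exp (-(K * s))), ?_, ?_⟩
    · show |f (b - (b - t) * Real.exp (-(K * s)))| ≤ _
      have := hf _ hge hltb
      calc |f (b - (b - t) * Real.exp (-(K * s)))|
          ≤ K * (b - (b - (b - t) * Real.exp (-(K * s)))) := this
        _ = K * ((b - t) * Real.exp (-(K * s))) := by ring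
    · have h1 : HasDerivAt (fun s : ℝ => -(K * s)) (-K) s := by
        simpa using (hasDerivAt_id s).const_mul (-K)
      have h2 := (h1.exp.const_mul (b - t)).const_sub b
      refine h2.congr_deriv ?_
      ring

lemma flow_linear (f : ℝ → ℝ) (t T : ℝ) (hT : 0 < T)
    (hf : ∀ x, t ≤ x → |f x| ≤ 1) :
    ∃ u : ℝ → ℝ, u 0 = t ∧ t < u T ∧
      ∀ s ∈ Set.Icc 0 T, ∃ d, |f (u s)| ≤ d ∧ HasDerivAt u d s := by
  refine ⟨fun s => t + s, by simp, by show t < t + T; linarith, ?_⟩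
  intro s hs
  exact ⟨1, hf (t + s) (by linarith [hs.1]), by simpa using (hasDerivAt_id s).const_add t⟩

lemma reach (n : ℕ) (hn : 2 ≤ n) (κ β : ℝ)
    (hcase : 0 < κ ∨ β ≤ -(((n : ℝ) - 1) * Real.sqrt |κ|))
    (t : ℝ) (ht : 0 ≤ t) (htb : (t : EReal) < bkb n κ β) (T : ℝ) (hT : 0 < T) :
    ∃ tt : ℝ, t < tt ∧ (tt : EReal) < bkb n κ β ∧
      ∃ u : ℝ → ℝ, u 0 = t ∧ u T = tt ∧
        ∀ s ∈ Set.Icc 0 T, ∃ d, |fkb n κ β (u s)| ≤ d ∧ HasDerivAt u d s := by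
  have hn1 : (1 : ℝ) ≤ (n : ℝ) - 1 := by
    have : (2 : ℝ) ≤ (n : ℝ) := by exact_mod_cast hn
    linarith
  rcases lt_trichotomy κ 0 with hκ | hκ | hκ
  · -- κ < 0
    have hκ' : ¬ 0 < κ := not_lt.mpr hκ.le
    have hκ'' : κ ≠ 0 := hκ.ne
    have ha : 0 < Real.sqrt (-κ) := Real.sqrt_pos.mpr (by linarith)
    have hβ : β ≤ -(((n : ℝ) - 1) * Real.sqrt (-κ)) := by
      rcases hcase with h | h
      · exact absurd h hκ'
      · rwa [abs_of_neg hκ] at h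
    have hna : 0 < ((n : ℝ) - 1) * Real.sqrt (-κ) := mul_pos (by linarith) ha
    have hβneg : β < 0 := lt_of_le_of_lt hβ (by linarith)
    have habsβ : |β| = -β := abs_of_neg hβneg
    rcases hβ.lt_or_eq with hlt | heq
    · -- β < -((n-1)√(-κ))
      have h1 : ¬ |β| < ((n : ℝ) - 1) * Real.sqrt (-κ) := by rw [habsβ]; linarith
      have h2 : ¬ |β| = ((n : ℝ) - 1) * Real.sqrt (-κ) := by rw [habsβ]; intro h; linarith
      have hfx : ∀ x, fkb n κ β x
          = Real.sinh (Real.sqrt (-κ) * x + ckb n κ β) / Real.sqrt (-κ) := by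
        intro x; simp [fkb, hκ', hκ'', h1, h2]
      have hbv : bkb n κ β = ((-(ckb n κ β) / Real.sqrt (-κ) : ℝ) : EReal) := by
        simp [bkb, hκ', hκ'', hlt]
      -- c < 0
      set z : ℝ := (((n : ℝ) - 1) * Real.sqrt (-κ)) / β with hzdef
      have hcv : ckb n κ β = _root_.artanh z := by simp [ckb, hκ', hκ'', h1, h2, hzdef]
      have hz0 : z < 0 := div_neg_of_pos_of_neg hna hβneg
      have hz1 : -1 < z := by
        rw [hzdef, lt_div_iff_of_neg hβneg]
        linarith
      have hcneg : ckb n κ β < 0 := by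
        rw [hcv]
        have hx0 : 0 < (1 + z) / (1 - z) := by
          apply div_pos <;> linarith
        have hx1 : (1 + z) / (1 - z) < 1 := by
          rw [div_lt_one (by linarith)]; linarith
        have := Real.log_neg hx0 hx1
        unfold _root_.artanh; linarith
      set c := ckb n κ β
      set a := Real.sqrt (-κ)
      set b := -c / a with hbdef
      rw [hbv] at htb
      have htb' : t < b := EReal.coe_lt_coe_iff.mp htb
      have hK : (0:ℝ) < Real.cosh (a * (b - t)) := Real.cosh_pos _
      have hf : ∀ x, t ≤ x → x < b → |fkb n κ β x| ≤ Real.cosh (a * (b - t)) * (b - x) := by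
        intro x hx1 hx2
        rw [hfx]
        have hax : a * x < -c := by
          have := (lt_div_iff₀ ha).mp (by rw [← hbdef] ; exact hx2 : x < -c / a)
          linarith [this]
        have hy0 : 0 < -(a * x + c) := by linarith
        have hyab : -(a * x + c) = a * (b - x) := by
          rw [hbdef]; field_simp; ring
        have hyM : -(a * x + c) ≤ a * (b - t) := by
          rw [hyab]
          have : b - x ≤ b - t := by linarith
          nlinarith
        have hsinh : Real.sinh (-(a * x + c)) ≤ (-(a * x + c)) * Real.cosh (a * (b - t)) := by
          calc Real.sinh (-(a * x + c)) ≤ (-(a * x + c)) * Real.cosh (-(a * x + c)) :=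
                sinh_le_mul_cosh hy0.le
            _ ≤ (-(a * x + c)) * Real.cosh (a * (b - t)) := by
                apply mul_le_mul_of_nonneg_left _ hy0.le
                rw [Real.cosh_le_cosh, abs_of_pos hy0, abs_of_nonneg (by nlinarith : (0:ℝ) ≤ a * (b - t))]
                exact hyM
        have hsneg : Real.sinh (a * x + c) < 0 := by
          rw [← Real.sinh_zero]
          exact Real.sinh_lt_sinh.mpr (by linarith)
        rw [abs_div, abs_of_pos ha, abs_of_neg hsneg, div_le_iff₀ ha]
        rw [Real.sinh_neg, hyab] at hsinh
        nlinarith [hsinh]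
      obtain ⟨u, hu0, huT, huTb, hud⟩ := flow_finite (fkb n κ β) b t
          (Real.cosh (a * (b - t))) T htb' hK hT hf
      refine ⟨u T, huT, ?_, u, hu0, rfl, hud⟩
      rw [hbv]; exact_mod_cast huTb
    · -- β = -((n-1)√(-κ))
      have h1 : ¬ |β| < ((n : ℝ) - 1) * Real.sqrt (-κ) := by rw [habsβ, heq]; simp
      have h2 : |β| = ((n : ℝ) - 1) * Real.sqrt (-κ) := by rw [habsβ, heq]; ring
      have hβnle : ¬ (0 : ℝ) ≤ β := not_le.mpr hβneg
      have hfx : ∀ x, fkb n κ β x = Real.exp (-1 * Real.sqrt (-κ) * x) := by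
        intro x; simp [fkb, hκ', hκ'', h1, h2, hβnle]
      have hbv : bkb n κ β = ⊤ := by
        have : ¬ β < -(((n : ℝ) - 1) * Real.sqrt (-κ)) := by rw [heq]; exact lt_irrefl _
        simp [bkb, hκ', hκ'', this]
      have hf : ∀ x, t ≤ x → |fkb n κ β x| ≤ 1 := by
        intro x hx
        rw [hfx, Real.abs_exp, Real.exp_le_one_iff]
        nlinarith [ha]
      obtain ⟨u, hu0, huT, hud⟩ := flow_linear (fkb n κ β) t T hT hf
      exact ⟨u T, huT, by rw [hbv]; exact EReal.coe_lt_top _, u, hu0, rfl, hud⟩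
  · -- κ = 0
    subst hκ
    have hβ : β ≤ 0 := by
      rcases hcase with h | h
      · exact absurd h (lt_irrefl 0)
      · simpa using h
    rcases hβ.lt_or_eq with hβlt | hβ0
    · -- β < 0
      have hβ0' : β ≠ 0 := hβlt.ne
      have hfx : ∀ x, fkb n 0 β x = x + ((n : ℝ) - 1) / β := by
        intro x; simp [fkb, ckb, hβ0']
      have hbv : bkb n 0 β = ((-(((n : ℝ) - 1) / β) : ℝ) : EReal) := by
        simp [bkb, hβlt]
      rw [hbv] at htb
      have htb' : t < -(((n : ℝ) - 1) / β) := EReal.coe_lt_coe_iff.mp htb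
      have hf : ∀ x, t ≤ x → x < -(((n : ℝ) - 1) / β) → |fkb n 0 β x| ≤ 1 * (-(((n : ℝ) - 1) / β) - x) := by
        intro x hx1 hx2
        rw [hfx, one_mul, abs_of_nonpos (by linarith)]
        linarith
      obtain ⟨u, hu0, huT, huTb, hud⟩ := flow_finite (fkb n 0 β) (-(((n : ℝ) - 1) / β)) t
          1 T htb' one_pos hT hf
      refine ⟨u T, huT, ?_, u, hu0, rfl, hud⟩
      rw [hbv]; exact_mod_cast huTb
    · -- β = 0
      subst hβ0
      have hfx : ∀ x, fkb n 0 0 x = 1 := by intro x; simp [fkb]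
      have hbv : bkb n 0 0 = ⊤ := by simp [bkb]
      have hf : ∀ x, t ≤ x → |fkb n 0 0 x| ≤ 1 := by
        intro x _; rw [hfx]; norm_num
      obtain ⟨u, hu0, huT, hud⟩ := flow_linear (fkb n 0 0) t T hT hf
      exact ⟨u T, huT, by rw [hbv]; exact EReal.coe_lt_top _, u, hu0, rfl, hud⟩
  · -- κ > 0
    have ha : 0 < Real.sqrt κ := Real.sqrt_pos.mpr hκ
    have hc0 : 0 < ckb n κ β := by
      have h1 := Real.arctan_lt_pi_div_two (β / (((n : ℝ) - 1) * Real.sqrt κ))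
      simp only [ckb, if_pos hκ]; linarith
    have hcπ : ckb n κ β < π := by
      have h1 := Real.neg_pi_div_two_lt_arctan (β / (((n : ℝ) - 1) * Real.sqrt κ))
      simp only [ckb, if_pos hκ]; linarith
    have hfx : ∀ x, fkb n κ β x
        = Real.sin (Real.sqrt κ * x + ckb n κ β) / Real.sqrt κ := by
      intro x; simp [fkb, if_pos hκ]
    have hbv : bkb n κ β = (((π - ckb n κ β) / Real.sqrt κ : ℝ) : EReal) := by
      simp [bkb, if_pos hκ]
    set c := ckb n κ β
    set a := Real.sqrt κ
    rw [hbv] at htb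
    have htb' : t < (π - c) / a := EReal.coe_lt_coe_iff.mp htb
    have hf : ∀ x, t ≤ x → x < (π - c) / a → |fkb n κ β x| ≤ 1 * ((π - c) / a - x) := by
      intro x hx1 hx2
      have hθ0 : 0 ≤ a * x + c := by nlinarith
      have hθπ : a * x + c ≤ π := by
        have h3 := (lt_div_iff₀ ha).mp hx2
        nlinarith
      have hsin : Real.sin (a * x + c) ≤ π - (a * x + c) := by
        rw [← Real.sin_pi_sub]
        exact Real.sin_le (by linarith)
      have hsin0 : 0 ≤ Real.sin (a * x + c) :=
        Real.sin_nonneg_of_nonneg_of_le_pi hθ0 hθπ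
      rw [hfx, one_mul, abs_of_nonneg (div_nonneg hsin0 ha.le), div_le_iff₀ ha]
      have h4 : ((π - c) / a - x) * a = π - c - a * x := by field_simp
      rw [h4]
      linarith
    obtain ⟨u, hu0, huT, huTb, hud⟩ := flow_finite (fkb n κ β) ((π - c) / a) t 1 T
        htb' one_pos hT hf
    refine ⟨u T, huT, ?_, u, hu0, rfl, hud⟩
    rw [hbv]; exact_mod_cast huTb

/-- Past reachability in the comparison warped product
`M = [0, b_{κ,β}) ×_{f_{κ,β}} Σ`: balls `{t} × B_p(r)` are contained in `J⁻((t̃,p))` for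
a suitable uniform `t̃ < b_{κ,β}`, and `M = J⁻([0,b_{κ,β}) × {p})` for every `p`.
The connected Riemannian manifold `(Σ,h)` is abstracted as a metric length space. -/
theorem comparison_warped_product_past_reachability
    {X : Type*} [MetricSpace X]
    (hlength : ∀ p q : X, ∀ ε : ℝ, 0 < ε → ∃ (S : ℝ) (cb : ℝ → X),
      0 < S ∧ S ≤ dist q p + ε ∧ LipschitzWith 1 cb ∧ cb 0 = q ∧ cb S = p)
    (n : ℕ) (hn : 2 ≤ n) (κ β : ℝ)
    (hcase : 0 < κ ∨ β ≤ -(((n : ℝ) - 1) * Real.sqrt |κ|)) :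
    (∀ t : ℝ, 0 ≤ t → (t : EReal) < bkb n κ β → ∀ r : ℝ, 0 < r →
      ∃ tt : ℝ, t < tt ∧ (tt : EReal) < bkb n κ β ∧
        ∀ p q : X, dist q p < r → causalPast (fkb n κ β) (t, q) (tt, p)) ∧
    (∀ p q : X, ∀ s : ℝ, 0 ≤ s → (s : EReal) < bkb n κ β →
      ∃ tt : ℝ, 0 ≤ tt ∧ (tt : EReal) < bkb n κ β ∧
        causalPast (fkb n κ β) (s, q) (tt, p)) := by
  have H1 : ∀ t : ℝ, 0 ≤ t → (t : EReal) < bkb n κ β → ∀ r : ℝ, 0 < r →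
      ∃ tt : ℝ, t < tt ∧ (tt : EReal) < bkb n κ β ∧
        ∀ p q : X, dist q p < r → causalPast (fkb n κ β) (t, q) (tt, p) := by
    intro t ht htb r hr
    obtain ⟨tt, h1, h2, u, hu0, huT, hud⟩ := reach n hn κ β hcase t ht htb r hr
    refine ⟨tt, h1, h2, ?_⟩
    intro p q hpq
    obtain ⟨S, cb, hS0, hSle, hlip, hcb0, hcbS⟩ := hlength p q (r - dist q p) (by linarith)
    have hSr : S ≤ r := by linarith
    refine Or.inr ⟨r, u, fun s => cb (min s S), hr, hu0, huT, ?_, ?_, ?_, hud⟩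
    · show cb (min 0 S) = q
      rw [min_eq_left hS0.le, hcb0]
    · show cb (min r S) = p
      rw [min_eq_right hSr, hcbS]
    · simpa [Function.comp_def] using hlip.comp (LipschitzWith.id.min_const S)
  refine ⟨H1, ?_⟩
  intro p q s hs hsb
  obtain ⟨tt, h1, h2, h3⟩ := H1 s hs hsb (dist q p + 1)
    (by linarith [dist_nonneg (x := q) (y := p)])
  exact ⟨tt, le_trans hs h1.le, h2, h3 p q (by linarith)⟩
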